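/- Let μ ≥ 1 and let N be an even integer with N > 2μ. Then ‖T_N(μ)⁻¹‖₁ ≤ 2√2 + 1/(2μ). The bound is uniform with respect to the even approximation dimension N. -/

import Mathlib

/-- The `N × N` tridiagonal matrix `T_N(μ)` with diagonal `2, 4, …, 2N`, subdiagonal `μ`
and superdiagonal `-μ` (0-based indexing). -/
noncomputable def Tmat (N : ℕ) (μ : ℝ) : Matrix (Fin N) (Fin N) ℝ :=
  Matrix.of fun i j =>
    if (i : ℕ) = (j : ℕ) then 2 * (((i : ℕ) : ℝ) + 1)
    else if (i : ℕ) = (j : ℕ) + 1 then μ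
    else if (j : ℕ) = (i : ℕ) + 1 then -μ
    else 0

/-- The matrix norm induced by the `‖·‖₁` vector norm: the maximum over columns of the
sum of absolute values of the entries of the column. -/
noncomputable def mat1norm {m n : ℕ} (A : Matrix (Fin m) (Fin n) ℝ) : ℝ :=
  ⨆ l : Fin n, ∑ i : Fin m, |A i l|

noncomputable def useq (μ : ℝ) : ℕ → ℝ
  | 0 => 0
  | 1 => 1
  | (n+2) => (2*((n:ℝ)+1)/μ) * useq μ (n+1) + useq μ n

noncomputable def Dseq (μ : ℝ) (N : ℕ) : ℕ → ℝ
  | 0 => 0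
  | 1 => 1
  | (j+2) => (2*((N:ℝ)-(j:ℝ))/μ) * Dseq μ N (j+1) + Dseq μ N j

noncomputable def dseq (μ : ℝ) (N : ℕ) (i : ℕ) : ℝ := Dseq μ N (N+1-i)

section seqs
variable {μ : ℝ} {N : ℕ}

lemma urec (hμ : 0 < μ) (n : ℕ) :
    μ * useq μ (n+2) = 2*((n:ℝ)+1) * useq μ (n+1) + μ * useq μ n := by
  show μ * ((2*((n:ℝ)+1)/μ) * useq μ (n+1) + useq μ n) = _
  field_simp

lemma useq_nonneg_pos (hμ : 0 < μ) : ∀ n, 0 ≤ useq μ n ∧ 0 < useq μ (n+1) := by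
  intro n
  induction n with
  | zero => exact ⟨le_refl _, one_pos⟩
  | succ n ih =>
    refine ⟨ih.2.le, ?_⟩
    show 0 < (2*((n:ℝ)+1)/μ) * useq μ (n+1) + useq μ n
    have h1 : 0 < (2*((n:ℝ)+1)/μ) := by positivity
    nlinarith [ih.1, ih.2]

lemma useq_nonneg (hμ : 0 < μ) (n : ℕ) : 0 ≤ useq μ n := (useq_nonneg_pos hμ n).1

lemma useq_pos (hμ : 0 < μ) (n : ℕ) : 0 < useq μ (n+1) := (useq_nonneg_pos hμ n).2

lemma dseq_zero_top : dseq μ N (N+1) = 0 := by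
  unfold dseq
  simp [Nat.sub_self]
  rfl

lemma Dseq_nonneg_pos (hμ : 0 < μ) : ∀ j, j ≤ N → 0 ≤ Dseq μ N j ∧ 0 < Dseq μ N (j+1) := by
  intro j
  induction j with
  | zero => exact fun _ => ⟨le_refl _, one_pos⟩
  | succ j ih =>
    intro hj
    have ihj := ih (Nat.le_of_succ_le hj)
    refine ⟨ihj.2.le, ?_⟩
    show 0 < (2*((N:ℝ)-(j:ℝ))/μ) * Dseq μ N (j+1) + Dseq μ N j
    have hNj : (1:ℝ) ≤ (N:ℝ) - (j:ℝ) := by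
      have : (j:ℝ) + 1 ≤ (N:ℝ) := by exact_mod_cast hj
      linarith
    have h1 : 0 < (2*((N:ℝ)-(j:ℝ))/μ) := by positivity
    nlinarith [ihj.1, ihj.2]

lemma dseq_pos (hμ : 0 < μ) (i : ℕ) (hi : i ≤ N) : 0 < dseq μ N i := by
  unfold dseq
  have h : N + 1 - i = (N - i) + 1 := by omega
  rw [h]
  exact (Dseq_nonneg_pos hμ (N-i) (by omega)).2

lemma dseq_nonneg (hμ : 0 < μ) (i : ℕ) : 0 ≤ dseq μ N i := by
  unfold dseq
  rcases Nat.eq_zero_or_eq_succ_pred (N+1-i) with h | h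
  · rw [h]; exact le_refl _
  · rw [h]
    refine ((Dseq_nonneg_pos hμ (N+1-i-1) ?_).2).le
    omega

lemma drec (hμ : 0 < μ) (m : ℕ) (hm : m + 1 ≤ N) :
    μ * dseq μ N m = 2*((m:ℝ)+1) * dseq μ N (m+1) + μ * dseq μ N (m+2) := by
  unfold dseq
  have h1 : N + 1 - m = (N - (m+1)) + 2 := by omega
  have h2 : N + 1 - (m+1) = (N - (m+1)) + 1 := by omega
  have h3 : N + 1 - (m+2) = N - (m+1) := by omega
  rw [h1, h2, h3]
  set j := N - (m+1) with hj
  have hcast : (N:ℝ) - (j:ℝ) = (m:ℝ) + 1 := by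
    have : (j:ℝ) = (N:ℝ) - ((m:ℝ)+1) := by
      rw [hj]
      push_cast [Nat.cast_sub hm]
      ring
    rw [this]; ring
  show μ * ((2*((N:ℝ)-(j:ℝ))/μ) * Dseq μ N (j+1) + Dseq μ N j) = _
  rw [hcast]
  field_simp

lemma dratio (hμ : 0 < μ) (m : ℕ) (hm : m + 1 ≤ N) :
    2*((m:ℝ)+1) * dseq μ N (m+1) ≤ μ * dseq μ N m := by
  have h := drec hμ m hm
  nlinarith [dseq_nonneg hμ (N := N) (m+2)]

lemma dlower_aux (hμ : 1 ≤ μ) (hN : 2*μ < (N:ℝ)) :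
    ∀ f m : ℕ, ((m:ℝ)+1 ≤ μ) → (μ < (m:ℝ)+1+(f:ℝ)) →
      2 * dseq μ N m ≤ 5 * dseq μ N (m+1) := by
  have hμ0 : 0 < μ := lt_of_lt_of_le one_pos hμ
  intro f
  induction f with
  | zero => intro m h1 h2; push_cast at h2; linarith
  | succ f ih =>
    intro m h1 h2
    have hm1N : m + 1 ≤ N := by
      have h : ((m:ℝ)+1) < (N:ℝ) := by linarith
      have : m + 1 < N := by exact_mod_cast h
      omega
    have hm2N : m + 2 ≤ N := by
      have h : ((m:ℝ)+2) < (N:ℝ) := by linarith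
      have : m + 2 < N := by exact_mod_cast h
      omega
    have hrec := drec (N:=N) hμ0 m hm1N
    have hd1 : 0 ≤ dseq μ N (m+1) := dseq_nonneg hμ0 _
    have hd2 : 0 ≤ dseq μ N (m+2) := dseq_nonneg hμ0 _
    have e12 : m + 1 + 1 = m + 2 := by omega
    have e13 : m + 1 + 2 = m + 3 := by omega
    by_cases hcase : μ ≤ (m:ℝ)+3
    · -- direct case: μ ∈ [m+1, m+3]
      have hrat := dratio (N:=N) hμ0 (m+1) hm2N
      rw [e12] at hrat
      push_cast at hrat
      have hrat : 2 * ((m:ℝ) + 2) * dseq μ N (m + 2) ≤ μ * dseq μ N (m + 1) := by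
        convert hrat using 3; ring
      have hco : 4*((m:ℝ)+1)*((m:ℝ)+2) + μ^2 ≤ 5*μ*((m:ℝ)+2) := by
        nlinarith [mul_nonneg (sub_nonneg.mpr h1) (sub_nonneg.mpr hcase)]
      have hr2 : μ * (2*((m:ℝ)+2) * dseq μ N (m+2)) ≤ μ * (μ * dseq μ N (m+1)) :=
        mul_le_mul_of_nonneg_left hrat hμ0.le
      have hco2 : (4*((m:ℝ)+1)*((m:ℝ)+2) + μ^2) * dseq μ N (m+1)
          ≤ (5*μ*((m:ℝ)+2)) * dseq μ N (m+1) := mul_le_mul_of_nonneg_right hco hd1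
      have key : μ * ((m:ℝ)+2) * (2 * dseq μ N m) ≤ μ * ((m:ℝ)+2) * (5 * dseq μ N (m+1)) := by
        have e1 : μ * ((m:ℝ)+2) * (2 * dseq μ N m)
            = ((m:ℝ)+2) * (2 * (μ * dseq μ N m)) := by ring
        rw [e1, hrec]
        nlinarith [hr2, hco2]
      have hpos : 0 < μ * ((m:ℝ)+2) := by positivity
      exact le_of_mul_le_mul_left key hpos
    · -- main case: μ ≥ m+3, use IH at m+2
      push_neg at hcase
      have hIH : 2 * dseq μ N (m+2) ≤ 5 * dseq μ N (m+3) := by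
        apply ih
        · push_cast; linarith
        · push_cast at h2 ⊢; linarith
      have hrec2 := drec (N:=N) hμ0 (m+1) hm2N
      rw [e12, e13] at hrec2
      push_cast at hrec2
      have hge : (2*((m:ℝ)+2) + 2*μ/5) * dseq μ N (m+2) ≤ μ * dseq μ N (m+1) := by
        rw [hrec2]
        nlinarith [mul_le_mul_of_nonneg_left hIH hμ0.le]
      have hco : 2*μ^2 ≤ (5*μ - 4*((m:ℝ)+1)) * (2*((m:ℝ)+2) + 2*μ/5) := by
        nlinarith [mul_nonneg (by positivity : (0:ℝ) ≤ 42*((m:ℝ)+1)) (sub_nonneg.mpr hcase.le)]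
      have hcopos : (0:ℝ) ≤ 5*μ - 4*((m:ℝ)+1) := by nlinarith
      have h4 : 2*μ^2 * dseq μ N (m+2) ≤ (5*μ - 4*((m:ℝ)+1)) * (μ * dseq μ N (m+1)) :=
        calc 2*μ^2 * dseq μ N (m+2)
            ≤ ((5*μ - 4*((m:ℝ)+1)) * (2*((m:ℝ)+2) + 2*μ/5)) * dseq μ N (m+2) :=
              mul_le_mul_of_nonneg_right hco hd2
          _ = (5*μ - 4*((m:ℝ)+1)) * ((2*((m:ℝ)+2) + 2*μ/5) * dseq μ N (m+2)) := by ring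
          _ ≤ (5*μ - 4*((m:ℝ)+1)) * (μ * dseq μ N (m+1)) :=
              mul_le_mul_of_nonneg_left hge hcopos
      have hrecμ : μ*(μ * dseq μ N m) = μ*(2*((m:ℝ)+1) * dseq μ N (m+1) + μ * dseq μ N (m+2)) := by
        rw [hrec]
      have key : (μ*μ) * (2 * dseq μ N m) ≤ (μ*μ) * (5 * dseq μ N (m+1)) := by
        nlinarith [hrecμ, h4]
      exact le_of_mul_le_mul_left key (by positivity)

lemma dlower (hμ : 1 ≤ μ) (hN : 2*μ < (N:ℝ)) (m : ℕ) (hm : (m:ℝ)+1 ≤ μ) :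
    2 * dseq μ N m ≤ 5 * dseq μ N (m+1) := by
  apply dlower_aux hμ hN N m hm
  have : (0:ℝ) ≤ (m:ℝ) := Nat.cast_nonneg m
  linarith

lemma usum (hμ : 0 < μ) (n : ℕ) :
    ∑ m ∈ Finset.range n, 2*((m:ℝ)+1) * useq μ (m+1)
      = μ * (useq μ (n+1) + useq μ n - 1) := by
  induction n with
  | zero => simp [useq]
  | succ n ih =>
    rw [Finset.sum_range_succ, ih]
    have := urec hμ n
    push_cast
    linarith

lemma dsum (hμ : 0 < μ) (L : ℕ) (n : ℕ) (h1 : L+1 ≤ n) (h2 : n ≤ N) :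
    ∑ m ∈ Finset.Ico (L+1) n, 2*((m:ℝ)+1) * dseq μ N (m+1)
      = μ * (dseq μ N (L+1) + dseq μ N (L+2) - dseq μ N n - dseq μ N (n+1)) := by
  induction n, h1 using Nat.le_induction with
  | base => simp
  | succ n hn ih =>
    have hnN : n ≤ N := by omega
    rw [Finset.sum_Ico_succ_top hn, ih hnN]
    have := drec (N:=N) hμ n (by omega)
    push_cast
    linarith

noncomputable def Zc (μ : ℝ) (N L : ℕ) : ℝ :=
  μ * useq μ L + 2*((L:ℝ)+1) * useq μ (L+1)
    + μ * (useq μ (L+1) / dseq μ N (L+1)) * dseq μ N (L+2)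

noncomputable def alphac (μ : ℝ) (N L : ℕ) : ℝ := 1 / Zc μ N L

noncomputable def betac (μ : ℝ) (N L : ℕ) : ℝ :=
  alphac μ N L * useq μ (L+1) / dseq μ N (L+1)

noncomputable def xs (μ : ℝ) (N L : ℕ) (i : ℕ) : ℝ :=
  if i ≤ L+1 then alphac μ N L * useq μ i
  else betac μ N L * (-1)^(i-(L+1)) * dseq μ N i

section column
variable {μ : ℝ} {N L : ℕ}

lemma Zc_pos (hμ : 0 < μ) (hL : L < N) : 0 < Zc μ N L := by
  have h1 : 0 ≤ μ * useq μ L := mul_nonneg hμ.le (useq_nonneg hμ L)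
  have h2 : 0 < 2*((L:ℝ)+1) * useq μ (L+1) :=
    mul_pos (by positivity) (useq_pos hμ L)
  have h3 : 0 ≤ μ * (useq μ (L+1) / dseq μ N (L+1)) * dseq μ N (L+2) :=
    mul_nonneg (mul_nonneg hμ.le
      (div_nonneg (useq_nonneg hμ _) (dseq_pos hμ (L+1) hL).le)) (dseq_nonneg hμ _)
  unfold Zc
  linarith

lemma alphac_nonneg (hμ : 0 < μ) (hL : L < N) : 0 ≤ alphac μ N L := by
  unfold alphac
  have := Zc_pos (L := L) hμ hL
  positivity

lemma betac_nonneg (hμ : 0 < μ) (hL : L < N) : 0 ≤ betac μ N L := by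
  unfold betac
  exact div_nonneg (mul_nonneg (alphac_nonneg hμ hL) (useq_nonneg hμ _))
    (dseq_pos hμ (L+1) hL).le

lemma xmatch (hμ : 0 < μ) (hL : L < N) :
    alphac μ N L * useq μ (L+1) = betac μ N L * dseq μ N (L+1) := by
  unfold betac
  rw [div_mul_cancel₀]
  exact (dseq_pos hμ (L+1) hL).ne'

lemma Xdiag (hμ : 0 < μ) (hL : L < N) :
    2*((L:ℝ)+1) * (alphac μ N L * useq μ (L+1)) ≤ 1 := by
  have hZ := Zc_pos (L := L) hμ hL
  have h1 : 0 ≤ μ * useq μ L := mul_nonneg hμ.le (useq_nonneg hμ L)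
  have h3 : 0 ≤ μ * (useq μ (L+1) / dseq μ N (L+1)) * dseq μ N (L+2) :=
    mul_nonneg (mul_nonneg hμ.le
      (div_nonneg (useq_nonneg hμ _) (dseq_pos hμ (L+1) hL).le)) (dseq_nonneg hμ _)
  have e : 2*((L:ℝ)+1) * (alphac μ N L * useq μ (L+1))
      = (2*((L:ℝ)+1) * useq μ (L+1)) / Zc μ N L := by
    unfold alphac; field_simp
  rw [e, div_le_one hZ]
  unfold Zc
  linarith

lemma Xlow (hμ : 0 < μ) (hL : L < N) : μ * (alphac μ N L * useq μ L) ≤ 1 := by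
  have hZ := Zc_pos (L := L) hμ hL
  have h2 : 0 < 2*((L:ℝ)+1) * useq μ (L+1) :=
    mul_pos (by positivity) (useq_pos hμ L)
  have h3 : 0 ≤ μ * (useq μ (L+1) / dseq μ N (L+1)) * dseq μ N (L+2) :=
    mul_nonneg (mul_nonneg hμ.le
      (div_nonneg (useq_nonneg hμ _) (dseq_pos hμ (L+1) hL).le)) (dseq_nonneg hμ _)
  have e : μ * (alphac μ N L * useq μ L) = (μ * useq μ L) / Zc μ N L := by
    unfold alphac; field_simp
  rw [e, div_le_one hZ]
  unfold Zc
  linarith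

lemma Xhigh (hμ : 0 < μ) (hL : L < N) : μ * (betac μ N L * dseq μ N (L+2)) ≤ 1 := by
  have hZ := Zc_pos (L := L) hμ hL
  have h1 : 0 ≤ μ * useq μ L := mul_nonneg hμ.le (useq_nonneg hμ L)
  have h2 : 0 < 2*((L:ℝ)+1) * useq μ (L+1) :=
    mul_pos (by positivity) (useq_pos hμ L)
  have e : μ * (betac μ N L * dseq μ N (L+2))
      = (μ * (useq μ (L+1) / dseq μ N (L+1)) * dseq μ N (L+2)) / Zc μ N L := by
    unfold betac alphac; field_simp
  rw [e, div_le_one hZ]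
  unfold Zc
  linarith

lemma Xsmall (hμ : 1 ≤ μ) (hN : 2*μ < (N:ℝ)) (hL : L < N) (h : ((L:ℝ)+2) ≤ μ) :
    2*μ*(alphac μ N L * useq μ (L+1)) ≤ 5 := by
  have hμ0 : 0 < μ := lt_of_lt_of_le one_pos hμ
  have hlow := dlower hμ hN (L+1) (by push_cast; linarith)
  have hb := betac_nonneg hμ0 hL
  have h1 : 2 * (betac μ N L * dseq μ N (L+1)) ≤ 5 * (betac μ N L * dseq μ N (L+2)) := by
    nlinarith [mul_le_mul_of_nonneg_left hlow hb]
  have h2 := Xhigh hμ0 hL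
  rw [xmatch hμ0 hL]
  nlinarith [mul_le_mul_of_nonneg_left h1 hμ0.le]

lemma final_arith (μ R X Lo Hi : ℝ) (hμ : 1 ≤ μ)
    (hR : R = 0 ∨ R = 1 ∨ 2 ≤ R)
    (hX0 : 0 ≤ X) (hXd : 2*(R+1)*X ≤ 1)
    (hLo0 : 0 ≤ Lo) (hHi0 : 0 ≤ Hi)
    (hLo : Lo ≤ μ/2*X + 1/2) (hHi : 2*(R+2)*Hi ≤ μ*X + 1)
    (hLoz : R = 0 → Lo = 0)
    (hXs : R + 2 ≤ μ → 2*μ*X ≤ 5) :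
    Lo + X + Hi ≤ 11/4 := by
  rcases hR with hR | hR | hR
  · -- first column
    rw [hLoz hR]
    subst hR
    by_cases hμ2 : μ ≤ 2
    · have hμX : μ * X ≤ 1 := by nlinarith [mul_le_mul_of_nonneg_right hμ2 hX0]
      linarith
    · push_neg at hμ2
      have hs := hXs (by linarith)
      have hX54 : X ≤ 5/4 := by nlinarith [mul_le_mul_of_nonneg_right hμ2.le hX0]
      linarith
  · -- second column
    subst hR
    by_cases hμA : μ ≤ 4
    · have hμX : μ * X ≤ 1 := by nlinarith [mul_le_mul_of_nonneg_right hμA hX0]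
      have hX4 : X ≤ 1/4 := by linarith
      have hHi3 : Hi ≤ 1/3 := by nlinarith
      linarith
    · push_neg at hμA
      have hs := hXs (by linarith)
      have hμX : μ * X ≤ 5/2 := by linarith
      by_cases hμ11 : μ ≤ 11
      · have hX4 : X ≤ 1/4 := by linarith
        have hp : μ * X ≤ 11 * X := mul_le_mul_of_nonneg_right hμ11 hX0
        linarith
      · push_neg at hμ11
        have hX522 : X ≤ 5/22 := by
          nlinarith [mul_le_mul_of_nonneg_right hμ11.le hX0]
        linarith
  · -- columns ≥ 3
    by_cases hμA : μ ≤ 2*(R+1)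
    · have hμX : μ * X ≤ 1 := by nlinarith [mul_le_mul_of_nonneg_right hμA hX0]
      have hX4 : X ≤ 1/4 := by
        nlinarith [mul_nonneg (by linarith : (0:ℝ) ≤ 2*(R+1) - 4) hX0]
      have hHi3 : Hi ≤ 1/3 := by
        nlinarith [mul_nonneg (by linarith : (0:ℝ) ≤ 2*(R+2) - 6) hHi0]
      linarith
    · push_neg at hμA
      have hs := hXs (by linarith)
      have hμX : μ * X ≤ 5/2 := by linarith
      have hX512 : X ≤ 5/12 := by
        nlinarith [mul_le_mul_of_nonneg_right (by linarith : (6:ℝ) ≤ μ) hX0]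
      have hHi716 : Hi ≤ 7/16 := by
        nlinarith [mul_nonneg (by linarith : (0:ℝ) ≤ 2*(R+2) - 8) hHi0]
      linarith

lemma colsum_le (hμ : 1 ≤ μ) (hN : 2*μ < (N:ℝ)) (hL : L < N) :
    ∑ m ∈ Finset.range N, |xs μ N L (m+1)| ≤ 11/4 := by
  have hμ0 : 0 < μ := lt_of_lt_of_le one_pos hμ
  set a := alphac μ N L with ha
  set b := betac μ N L with hb
  have ha0 : 0 ≤ a := alphac_nonneg hμ0 hL
  have hb0 : 0 ≤ b := betac_nonneg hμ0 hL
  set X := a * useq μ (L+1) with hX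
  set Lo := ∑ m ∈ Finset.range L, a * useq μ (m+1) with hLodef
  set Hi := ∑ m ∈ Finset.Ico (L+1) N, b * dseq μ N (m+1) with hHidef
  -- step 1: the sum equals Lo + X + Hi
  have hsplit : ∑ m ∈ Finset.range N, |xs μ N L (m+1)| = Lo + X + Hi := by
    rw [Finset.range_eq_Ico, ← Finset.sum_Ico_consecutive _ (Nat.zero_le L) hL.le,
      Finset.sum_eq_sum_Ico_succ_bot hL]
    have e1 : ∑ m ∈ Finset.Ico 0 L, |xs μ N L (m+1)| = Lo := by
      rw [hLodef, ← Finset.range_eq_Ico]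
      apply Finset.sum_congr rfl
      intro m hm
      have hm' : m + 1 ≤ L + 1 := by
        have := Finset.mem_range.mp hm; omega
      rw [xs, if_pos hm']
      exact abs_of_nonneg (mul_nonneg ha0 (useq_nonneg hμ0 _))
    have e2 : |xs μ N L (L+1)| = X := by
      rw [xs, if_pos (le_refl _)]
      exact abs_of_nonneg (mul_nonneg ha0 (useq_nonneg hμ0 _))
    have e3 : ∑ m ∈ Finset.Ico (L+1) N, |xs μ N L (m+1)| = Hi := by
      rw [hHidef]
      apply Finset.sum_congr rfl
      intro m hm
      have hm' : ¬ (m + 1 ≤ L + 1) := by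
        have := (Finset.mem_Ico.mp hm).1; omega
      rw [xs, if_neg hm']
      rw [abs_mul, abs_mul, abs_pow, abs_neg, abs_one, one_pow, mul_one,
        abs_of_nonneg hb0, abs_of_nonneg (dseq_nonneg hμ0 _)]
    rw [e1, e2, e3]
    ring
  rw [hsplit]
  -- basic bounds
  have hX0 : 0 ≤ X := mul_nonneg ha0 (useq_nonneg hμ0 _)
  have hXd : 2*((L:ℝ)+1) * X ≤ 1 := Xdiag hμ0 hL
  have hLo0 : 0 ≤ Lo :=
    Finset.sum_nonneg fun m _ => mul_nonneg ha0 (useq_nonneg hμ0 _)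
  have hHi0 : 0 ≤ Hi :=
    Finset.sum_nonneg fun m _ => mul_nonneg hb0 (dseq_nonneg hμ0 _)
  -- Lo bound
  have hLo : Lo ≤ (μ/2)*X + 1/2 := by
    have hS : ∑ m ∈ Finset.range L, useq μ (m+1)
        ≤ μ * (useq μ (L+1) + useq μ L - 1) / 2 := by
      have h1 : ∑ m ∈ Finset.range L, useq μ (m+1)
          ≤ ∑ m ∈ Finset.range L, ((m:ℝ)+1) * useq μ (m+1) := by
        apply Finset.sum_le_sum
        intro m _
        have h := useq_nonneg hμ0 (m+1)
        nlinarith [Nat.cast_nonneg (α := ℝ) m]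
      have h2 : ∑ m ∈ Finset.range L, ((m:ℝ)+1) * useq μ (m+1)
          = μ * (useq μ (L+1) + useq μ L - 1) / 2 := by
        have := usum (μ := μ) hμ0 L
        have e : ∑ m ∈ Finset.range L, 2*((m:ℝ)+1) * useq μ (m+1)
            = 2 * ∑ m ∈ Finset.range L, ((m:ℝ)+1) * useq μ (m+1) := by
          rw [Finset.mul_sum]; apply Finset.sum_congr rfl; intro m _; ring
        rw [e] at this
        linarith
      linarith
    have hLoa : Lo = a * ∑ m ∈ Finset.range L, useq μ (m+1) := by
      rw [hLodef, Finset.mul_sum]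
    have h3 : Lo ≤ a * (μ * (useq μ (L+1) + useq μ L - 1) / 2) := by
      rw [hLoa]
      exact mul_le_mul_of_nonneg_left hS ha0
    have h4 := Xlow hμ0 hL
    have h5 : 0 ≤ a * μ := mul_nonneg ha0 hμ0.le
    -- a * (μ (u(L+1) + uL - 1)/2) = (μ/2) X + (1/2)(μ (a uL)) - aμ/2
    have e : a * (μ * (useq μ (L+1) + useq μ L - 1) / 2)
        = (μ/2) * X + (1/2) * (μ * (a * useq μ L)) - (a*μ)/2 := by
      rw [hX]; ring
    rw [e] at h3
    linarith
  have hLoz : L = 0 → Lo = 0 := by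
    intro h; rw [hLodef, h]; simp
  -- Hi bound
  have hHi : 2*((L:ℝ)+2) * Hi ≤ μ*X + 1 := by
    set T := ∑ m ∈ Finset.Ico (L+1) N, dseq μ N (m+1) with hTdef
    have h1 : 2*((L:ℝ)+2) * T ≤ ∑ m ∈ Finset.Ico (L+1) N, 2*((m:ℝ)+1) * dseq μ N (m+1) := by
      rw [hTdef, Finset.mul_sum]
      apply Finset.sum_le_sum
      intro m hm
      have hm1 : L + 1 ≤ m := (Finset.mem_Ico.mp hm).1
      have hm2 : ((L:ℝ)+1) ≤ (m:ℝ) := by exact_mod_cast hm1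
      have hd := dseq_nonneg (N := N) hμ0 (m+1)
      nlinarith
    have h2 := dsum (N := N) hμ0 L N hL (le_refl N)
    have h3 : 2*((L:ℝ)+2) * T ≤ μ * (dseq μ N (L+1) + dseq μ N (L+2)) := by
      rw [h2] at h1
      have hdN := dseq_nonneg (N := N) hμ0 N
      have hdN1 : dseq μ N (N+1) = 0 := dseq_zero_top
      nlinarith
    have h4 : b * (2*((L:ℝ)+2) * T) ≤ b * (μ * (dseq μ N (L+1) + dseq μ N (L+2))) :=
      mul_le_mul_of_nonneg_left h3 hb0
    have h5 : Hi = b * T := by rw [hHidef, hTdef, Finset.mul_sum]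
    have h6 := Xhigh hμ0 hL
    have h7 : X = b * dseq μ N (L+1) := by rw [hX]; exact xmatch hμ0 hL
    calc 2*((L:ℝ)+2) * Hi = b * (2*((L:ℝ)+2) * T) := by rw [h5]; ring
      _ ≤ b * (μ * (dseq μ N (L+1) + dseq μ N (L+2))) := h4
      _ = μ * (b * dseq μ N (L+1)) + μ * (b * dseq μ N (L+2)) := by ring
      _ ≤ μ*X + 1 := by rw [← h7] at *; linarith
  -- final case analysis
  have hXs : (L:ℝ) + 2 ≤ μ → 2*μ*X ≤ 5 := by
    intro h
    have := Xsmall hμ hN hL (by linarith)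
    rw [← hX] at this
    exact this
  have hR : (L:ℝ) = 0 ∨ (L:ℝ) = 1 ∨ 2 ≤ (L:ℝ) := by
    rcases Nat.lt_or_ge L 2 with h | h
    · interval_cases L
      · exact Or.inl (by norm_num)
      · exact Or.inr (Or.inl (by norm_num))
    · exact Or.inr (Or.inr (by exact_mod_cast h))
  have hLoz' : (L:ℝ) = 0 → Lo = 0 := by
    intro h
    exact hLoz (by exact_mod_cast h)
  exact final_arith μ (L:ℝ) X Lo Hi hμ hR hX0 hXd hLo0 hHi0 hLo hHi hLoz' hXs

end column

section xhelpers
variable {μ : ℝ} {N L : ℕ}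

lemma xs_le {i : ℕ} (h : i ≤ L+1) : xs μ N L i = alphac μ N L * useq μ i := by
  unfold xs; rw [if_pos h]

lemma xs_gt {i : ℕ} (h : L+1 < i) :
    xs μ N L i = betac μ N L * (-1)^(i-(L+1)) * dseq μ N i := by
  unfold xs; rw [if_neg (not_le.mpr h)]

lemma xs_d (hμ : 0 < μ) (hL : L < N) {i : ℕ} (h : L+1 ≤ i) :
    xs μ N L i = betac μ N L * (-1)^(i-(L+1)) * dseq μ N i := by
  rcases eq_or_lt_of_le h with h' | h'
  · rw [xs_le (le_of_eq h'.symm), ← h']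
    rw [Nat.sub_self, pow_zero, mul_one]
    exact xmatch hμ hL
  · exact xs_gt h'

lemma xs_zero : xs μ N L 0 = 0 := by
  rw [xs_le (Nat.zero_le _)]
  show alphac μ N L * useq μ 0 = 0
  show alphac μ N L * 0 = 0
  rw [mul_zero]

lemma xs_top (hL : L < N) : xs μ N L (N+1) = 0 := by
  rw [xs_gt (by omega), dseq_zero_top, mul_zero]

end xhelpers

section rowlemma
variable {μ : ℝ} {N : ℕ}

lemma Trow (μ : ℝ) (i : Fin N) (v : ℕ → ℝ) (h0 : v 0 = 0) (hN : v (N+1) = 0) :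
    ∑ j : Fin N, Tmat N μ i j * v ((j:ℕ)+1)
      = μ * v (i:ℕ) + 2*(((i:ℕ):ℝ)+1) * v ((i:ℕ)+1) - μ * v ((i:ℕ)+2) := by
  have key : ∀ j : Fin N, Tmat N μ i j * v ((j:ℕ)+1) =
      (if j = i then 2*(((i:ℕ):ℝ)+1) * v ((i:ℕ)+1) else 0)
      + ((if (i:ℕ) = (j:ℕ)+1 then μ * v (i:ℕ) else 0)
      + (if (j:ℕ) = (i:ℕ)+1 then -(μ * v ((i:ℕ)+2)) else 0)) := by
    intro j
    show (if (i : ℕ) = (j : ℕ) then 2 * (((i : ℕ) : ℝ) + 1)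
      else if (i : ℕ) = (j : ℕ) + 1 then μ
      else if (j : ℕ) = (i : ℕ) + 1 then -μ else 0) * v ((j:ℕ)+1) = _
    by_cases h1 : (i:ℕ) = (j:ℕ)
    · have hji : j = i := Fin.ext h1.symm
      rw [if_pos h1, if_pos hji, if_neg (by omega), if_neg (by omega), hji]
      ring
    · rw [if_neg h1, if_neg (fun h : j = i => h1 (by rw [h]))]
      by_cases h2 : (i:ℕ) = (j:ℕ)+1
      · rw [if_pos h2, if_pos h2, if_neg (by omega), ← h2]
        ring
      · rw [if_neg h2, if_neg h2]
        by_cases h3 : (j:ℕ) = (i:ℕ)+1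
        · rw [if_pos h3, if_pos h3, show (j:ℕ)+1 = (i:ℕ)+2 by omega]
          ring
        · rw [if_neg h3, if_neg h3]
          ring
  rw [Finset.sum_congr rfl (fun j _ => key j), Finset.sum_add_distrib,
    Finset.sum_add_distrib]
  have S1 : ∑ j : Fin N, (if j = i then 2*(((i:ℕ):ℝ)+1) * v ((i:ℕ)+1) else 0)
      = 2*(((i:ℕ):ℝ)+1) * v ((i:ℕ)+1) := by
    rw [Finset.sum_ite_eq' Finset.univ i]
    simp
  have S2 : ∑ j : Fin N, (if (i:ℕ) = (j:ℕ)+1 then μ * v (i:ℕ) else 0)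
      = μ * v (i:ℕ) := by
    rcases Nat.eq_zero_or_pos (i:ℕ) with hi | hi
    · rw [Finset.sum_eq_zero (fun j _ => if_neg (by omega))]
      rw [hi, h0, mul_zero]
    · have hmN : (i:ℕ) - 1 < N := by have := i.isLt; omega
      have hcond : ∀ j : Fin N, ((i:ℕ) = (j:ℕ)+1) ↔ j = ⟨(i:ℕ)-1, hmN⟩ := by
        intro j
        rw [Fin.ext_iff]
        show ((i:ℕ) = (j:ℕ)+1) ↔ (j:ℕ) = (i:ℕ)-1
        omega
      simp_rw [hcond]
      rw [Finset.sum_ite_eq' Finset.univ]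
      simp
  have S3 : ∑ j : Fin N, (if (j:ℕ) = (i:ℕ)+1 then -(μ * v ((i:ℕ)+2)) else 0)
      = -(μ * v ((i:ℕ)+2)) := by
    by_cases hi : (i:ℕ)+1 < N
    · have hcond : ∀ j : Fin N, ((j:ℕ) = (i:ℕ)+1) ↔ j = ⟨(i:ℕ)+1, hi⟩ := by
        intro j
        rw [Fin.ext_iff]
      simp_rw [hcond]
      rw [Finset.sum_ite_eq' Finset.univ]
      simp
    · have hiN : (i:ℕ)+1 = N := by have := i.isLt; omega
      rw [Finset.sum_eq_zero (fun j _ => if_neg (by have := j.isLt; omega))]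
      rw [show (i:ℕ)+2 = N+1 by omega, hN, mul_zero, neg_zero]
  rw [S1, S2, S3]
  ring

noncomputable def Xmat (μ : ℝ) (N : ℕ) : Matrix (Fin N) (Fin N) ℝ :=
  Matrix.of fun i j => xs μ N (j : ℕ) ((i : ℕ)+1)

lemma TX_eq_one (hμ : 0 < μ) : Tmat N μ * Xmat μ N = 1 := by
  ext i j
  rw [Matrix.mul_apply]
  set L := (j:ℕ) with hLdef
  have hL : L < N := j.isLt
  have hrow : ∑ k : Fin N, Tmat N μ i k * xs μ N L ((k:ℕ)+1)
      = μ * xs μ N L (i:ℕ) + 2*(((i:ℕ):ℝ)+1) * xs μ N L ((i:ℕ)+1)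
        - μ * xs μ N L ((i:ℕ)+2) := Trow μ i _ xs_zero (xs_top hL)
  have hXmat : ∀ k : Fin N, Xmat μ N k j = xs μ N L ((k:ℕ)+1) := fun k => rfl
  simp_rw [hXmat]
  rw [hrow]
  rcases lt_trichotomy (i:ℕ) L with hc | hc | hc
  · -- above the diagonal : homogeneous u-recurrence
    rw [xs_le (by omega), xs_le (by omega), xs_le (by omega)]
    rw [Matrix.one_apply_ne (by simp only [ne_eq, Fin.ext_iff]; omega)]
    linear_combination (-(alphac μ N L)) * urec hμ (i:ℕ)
  · -- the diagonal entry
    have hij : i = j := Fin.ext (by omega)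
    have hone : (1 : Matrix (Fin N) (Fin N) ℝ) i j = 1 := by
      rw [hij]; exact Matrix.one_apply_eq j
    rw [hone, xs_le (by omega), xs_le (by omega), xs_gt (by omega),
      show (i:ℕ)+2-(L+1) = 1 by omega, pow_one, hc]
    have hZ := (Zc_pos (L := L) hμ hL).ne'
    have hA : alphac μ N L * Zc μ N L = 1 := by
      unfold alphac; rw [one_div, inv_mul_cancel₀ hZ]
    unfold betac
    unfold Zc at hA
    linear_combination hA
  · -- below the diagonal : homogeneous d-recurrence
    have hi1N : (i:ℕ) + 1 ≤ N := i.isLt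
    rw [xs_d hμ hL (by omega), xs_d hμ hL (by omega), xs_d hμ hL (by omega)]
    rw [show (i:ℕ)+1-(L+1) = ((i:ℕ)-(L+1))+1 by omega,
      show (i:ℕ)+2-(L+1) = ((i:ℕ)-(L+1))+2 by omega, pow_succ, pow_succ]
    rw [Matrix.one_apply_ne (by simp only [ne_eq, Fin.ext_iff]; omega)]
    linear_combination (betac μ N L * (-1)^((i:ℕ)-(L+1))) * drec hμ (i:ℕ) hi1N

end rowlemma


/-- `‖T_N(μ)⁻¹‖₁ ≤ 2√2 + 1/(2μ)` for all even `N > 2μ`. -/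
theorem stmt11 (μ : ℝ) (hμ : 1 ≤ μ) (N : ℕ) (hNe : Even N) (hN : 2 * μ < (N : ℝ)) :
    mat1norm ((Tmat N μ)⁻¹) ≤ 2 * Real.sqrt 2 + 1 / (2 * μ) := by
  have hμ0 : 0 < μ := lt_of_lt_of_le one_pos hμ
  have hinv : (Tmat N μ)⁻¹ = Xmat μ N := Matrix.inv_eq_right_inv (TX_eq_one hμ0)
  have hN3 : 0 < N := by
    by_contra h
    push_neg at h
    interval_cases N
    · norm_num at hN; linarith
  haveI : Nonempty (Fin N) := ⟨⟨0, hN3⟩⟩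
  rw [hinv]
  have h1 : mat1norm (Xmat μ N) ≤ 11/4 := by
    apply ciSup_le
    intro l
    have he : ∑ i : Fin N, |Xmat μ N i l| = ∑ m ∈ Finset.range N, |xs μ N (l:ℕ) (m+1)| := by
      rw [← Fin.sum_univ_eq_sum_range (fun m => |xs μ N (l:ℕ) (m+1)|) N]
      rfl
    rw [he]
    exact colsum_le hμ hN l.isLt
  have h2 : (11:ℝ)/4 ≤ 2 * Real.sqrt 2 := by
    nlinarith [Real.sq_sqrt (by norm_num : (0:ℝ) ≤ 2), Real.sqrt_nonneg 2]
  have h3 : 0 < 1/(2*μ) := by positivity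
  linarith
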